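/- Every reduced outlet is determined by its enforcement behavior at position 1: if T and T' are reduced outlets of degree d with the same value r(T) = r(T') and such that for every axle A of degree d, (T,1) is enforced by A if and only if (T',1) is enforced by A, then M(T) = M(T'). -/

import Mathlib

/-- The cyclic shift `i ⊕_d x`: `i + x` if `x + ((i - 1) mod d) < d`, and
`i + x - d` otherwise. -/
def oplus (d i x : ℤ) : ℤ :=
  if x + (i - 1) % d < d then i + x else i + x - d

/-- An axle of degree `d`: a pair of functions `l, u : {1,...,5d} → {5,...,12}`
satisfying (A1), (A2), (A3). -/
def IsAxle (d : ℤ) (l u : ℤ → ℤ) : Prop :=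
  (∀ i : ℤ, 1 ≤ i → i ≤ 5 * d → l i ≤ u i) ∧
  (∀ i : ℤ, 1 ≤ i → i ≤ 5 * d →
    l i ∈ ({5, 6, 7, 8, 9} : Set ℤ) ∧ u i ∈ ({5, 6, 7, 8, 12} : Set ℤ)) ∧
  (∀ i : ℤ, 1 ≤ i → i ≤ d → l i ≠ u i →
    (l (2 * d + i) = 5 ∧ u (2 * d + i) = 12) ∧
    (l (3 * d + i) = 5 ∧ u (3 * d + i) = 12) ∧
    (l (4 * d + i) = 5 ∧ u (4 * d + i) = 12))

/-- The data `M(T) = {(p₁,l₁,u₁),...,(pₙ,lₙ,uₙ)}` of an outlet of degree `d`,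
encoded as a list of triples, satisfying (T1)-(T4). -/
def IsOutletData (d : ℤ) (M : List (ℤ × ℤ × ℤ)) : Prop :=
  (∀ e ∈ M, 1 ≤ e.1 ∧ e.1 ≤ 5 * d ∧ e.2.1 ≤ e.2.2 ∧
    e.2.1 ∈ ({5, 6, 7, 8, 9} : Set ℤ) ∧ e.2.2 ∈ ({5, 6, 7, 8, 12} : Set ℤ)) ∧
  (∀ e ∈ M, ∀ j i : ℤ, (j = 2 ∨ j = 3 ∨ j = 4) → 1 ≤ i → i ≤ d →
    e.1 = j * d + i → ∃ e' ∈ M, e'.1 = i ∧ e'.2.1 = e'.2.2 ∧ j + 4 ≤ e'.2.1)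

/-- The positioned outlet `(T, x)` is enforced by the axle `(lA, uA)`:
`lᵢ ≤ lA(pᵢ ⊕_d (x-1)) ≤ uA(pᵢ ⊕_d (x-1)) ≤ uᵢ` for all `i`. -/
def Enforced (d : ℤ) (lA uA : ℤ → ℤ) (M : List (ℤ × ℤ × ℤ)) (x : ℤ) : Prop :=
  ∀ e ∈ M, e.2.1 ≤ lA (oplus d e.1 (x - 1)) ∧ uA (oplus d e.1 (x - 1)) ≤ e.2.2

/-- The positioned outlet `(T, x)` is permitted by the axle `(lA, uA)`:
`uᵢ ≥ lA(pᵢ ⊕_d (x-1))` and `uA(pᵢ ⊕_d (x-1)) ≥ lᵢ` for all `i`. -/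
def Permitted (d : ℤ) (lA uA : ℤ → ℤ) (M : List (ℤ × ℤ × ℤ)) (x : ℤ) : Prop :=
  ∀ e ∈ M, lA (oplus d e.1 (x - 1)) ≤ e.2.2 ∧ e.2.1 ≤ uA (oplus d e.1 (x - 1))

/-- The lower bounds of `A ∧ (T, x)`: at coordinate `i`, the least integer
that is `≥ lA i` and `≥ lⱼ` for all `j` with `pⱼ ⊕_d (x-1) = i`. -/
def wedgeLow (d : ℤ) (lA : ℤ → ℤ) (M : List (ℤ × ℤ × ℤ)) (x : ℤ) : ℤ → ℤ :=
  fun i => (M.filter (fun e => oplus d e.1 (x - 1) = i)).foldr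
    (fun e a => max e.2.1 a) (lA i)

/-- The upper bounds of `A ∧ (T, x)`: at coordinate `i`, the largest integer
that is `≤ uA i` and `≤ uⱼ` for all `j` with `pⱼ ⊕_d (x-1) = i`. -/
def wedgeHigh (d : ℤ) (uA : ℤ → ℤ) (M : List (ℤ × ℤ × ℤ)) (x : ℤ) : ℤ → ℤ :=
  fun i => (M.filter (fun e => oplus d e.1 (x - 1) = i)).foldr
    (fun e a => min e.2.2 a) (uA i)

/-- The outlet data is reduced: the `pᵢ` are pairwise distinct and no
`(lᵢ, uᵢ)` equals `(5, 12)`. -/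
def ReducedData (M : List (ℤ × ℤ × ℤ)) : Prop :=
  (M.map Prod.fst).Pairwise (· ≠ ·) ∧ ∀ e ∈ M, ¬(e.2.1 = 5 ∧ e.2.2 = 12)

lemma oplus_zero (d i : ℤ) (hd : 0 < d) : oplus d i 0 = i := by
  unfold oplus
  rw [if_pos]
  · ring
  · simpa using Int.emod_lt_of_pos (i - 1) hd

lemma mem_uniq {M : List (ℤ × ℤ × ℤ)}
    (hp : (M.map Prod.fst).Pairwise (· ≠ ·)) {e e' : ℤ × ℤ × ℤ}
    (he : e ∈ M) (he' : e' ∈ M) (h : e.1 = e'.1) : e = e' := by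
  by_contra hne
  have hsym : Symmetric (fun a b : ℤ × ℤ × ℤ => a.1 ≠ b.1) :=
    fun a b hab h' => hab h'.symm
  haveI : Std.Symm (fun a b : ℤ × ℤ × ℤ => a.1 ≠ b.1) := ⟨fun a b hab => hsym hab⟩
  exact ((List.pairwise_map.mp hp).forall he he' hne) h

/-- Canonical lower bound function of the axle associated to outlet data. -/
def canL (M : List (ℤ × ℤ × ℤ)) (p : ℤ) : ℤ :=
  match M.find? (fun e => e.1 = p) with
  | some e => e.2.1
  | none => 5

/-- Canonical upper bound function of the axle associated to outlet data. -/
def canU (M : List (ℤ × ℤ × ℤ)) (p : ℤ) : ℤ :=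
  match M.find? (fun e => e.1 = p) with
  | some e => e.2.2
  | none => 12

lemma find_eq {M : List (ℤ × ℤ × ℤ)}
    (hp : (M.map Prod.fst).Pairwise (· ≠ ·)) {e : ℤ × ℤ × ℤ} (he : e ∈ M) :
    M.find? (fun e' => e'.1 = e.1) = some e := by
  cases hf : M.find? (fun e' => e'.1 = e.1) with
  | none =>
    have := List.find?_eq_none.mp hf e he
    simp at this
  | some a =>
    have h1 := List.mem_of_find?_eq_some hf
    have h2 := List.find?_some hf
    simp at h2
    rw [mem_uniq hp h1 he h2]

lemma canL_eq {M : List (ℤ × ℤ × ℤ)}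
    (hp : (M.map Prod.fst).Pairwise (· ≠ ·)) {e : ℤ × ℤ × ℤ} (he : e ∈ M) :
    canL M e.1 = e.2.1 := by
  unfold canL; rw [find_eq hp he]

lemma canU_eq {M : List (ℤ × ℤ × ℤ)}
    (hp : (M.map Prod.fst).Pairwise (· ≠ ·)) {e : ℤ × ℤ × ℤ} (he : e ∈ M) :
    canU M e.1 = e.2.2 := by
  unfold canU; rw [find_eq hp he]

lemma canAxle {d : ℤ} (hd : 0 < d) {M : List (ℤ × ℤ × ℤ)}
    (hM : IsOutletData d M) (hp : (M.map Prod.fst).Pairwise (· ≠ ·)) :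
    IsAxle d (canL M) (canU M) := by
  obtain ⟨h1, h2⟩ := hM
  refine ⟨?_, ?_, ?_⟩
  · intro i _ _
    unfold canL canU
    cases hf : M.find? (fun e => e.1 = i) with
    | none => norm_num
    | some a =>
      have ha := List.mem_of_find?_eq_some hf
      exact (h1 a ha).2.2.1
  · intro i _ _
    unfold canL canU
    cases hf : M.find? (fun e => e.1 = i) with
    | none => simp
    | some a =>
      have ha := List.mem_of_find?_eq_some hf
      exact ⟨(h1 a ha).2.2.2.1, (h1 a ha).2.2.2.2⟩
  · intro i hi1 hi2 hne
    have key : ∀ j : ℤ, (j = 2 ∨ j = 3 ∨ j = 4) →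
        canL M (j * d + i) = 5 ∧ canU M (j * d + i) = 12 := by
      intro j hj
      unfold canL canU
      cases hf : M.find? (fun e => e.1 = (j * d + i)) with
      | none => exact ⟨rfl, rfl⟩
      | some a =>
        exfalso
        have ha := List.mem_of_find?_eq_some hf
        have ha1 := List.find?_some hf
        simp at ha1
        obtain ⟨e', he', he'1, he'2, _⟩ := h2 a ha j i hj hi1 hi2 ha1
        apply hne
        have hl := canL_eq hp he'
        have hu := canU_eq hp he'
        rw [he'1] at hl hu
        rw [hl, hu, he'2]
    exact ⟨key 2 (Or.inl rfl), key 3 (Or.inr (Or.inl rfl)), key 4 (Or.inr (Or.inr rfl))⟩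

lemma canEnforced {d : ℤ} (hd : 0 < d) {M : List (ℤ × ℤ × ℤ)}
    (hp : (M.map Prod.fst).Pairwise (· ≠ ·)) :
    Enforced d (canL M) (canU M) M 1 := by
  intro e he
  have : (1 : ℤ) - 1 = 0 := by ring
  rw [this, oplus_zero d e.1 hd, canL_eq hp he, canU_eq hp he]
  exact ⟨le_refl _, le_refl _⟩

/-- If the canonical axle of `M` enforces `M'` (both reduced), then every entry of
`M'` has its position occupied in `M`, with tighter bounds in `M`. -/
lemma canKey {d : ℤ} (hd : 0 < d) {M M' : List (ℤ × ℤ × ℤ)}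
    (hM' : IsOutletData d M') (hred' : ReducedData M')
    (henf : Enforced d (canL M) (canU M) M' 1) :
    ∀ e' ∈ M', ∃ e ∈ M, e.1 = e'.1 ∧ e'.2.1 ≤ e.2.1 ∧ e.2.2 ≤ e'.2.2 := by
  intro e' he'
  have hb := henf e' he'
  have h10 : (1 : ℤ) - 1 = 0 := by ring
  rw [h10, oplus_zero d e'.1 hd] at hb
  unfold canL canU at hb
  cases hf : M.find? (fun e => e.1 = e'.1) with
  | none =>
    exfalso
    rw [hf] at hb
    simp only at hb
    have hl5 : e'.2.1 = 5 := by
      have := (hM'.1 e' he').2.2.2.1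
      have hle : e'.2.1 ≤ 5 := hb.1
      simp only [Set.mem_insert_iff, Set.mem_singleton_iff] at this
      omega
    have hu12 : e'.2.2 = 12 := by
      have := (hM'.1 e' he').2.2.2.2
      have hle : (12 : ℤ) ≤ e'.2.2 := hb.2
      simp only [Set.mem_insert_iff, Set.mem_singleton_iff] at this
      omega
    exact hred'.2 e' he' ⟨hl5, hu12⟩
  | some a =>
    rw [hf] at hb
    have ha := List.mem_of_find?_eq_some hf
    have ha1 := List.find?_some hf
    simp at ha1
    exact ⟨a, ha, ha1, hb.1, hb.2⟩

/-- A reduced outlet is determined by its enforcement behavior at position 1: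
if two reduced outlets of degree `d` with the same value are enforced at
position 1 by exactly the same axles, then they have the same data. -/
theorem reduced_outlet_unique (d : ℤ) (hd : 5 ≤ d)
    (M M' : List (ℤ × ℤ × ℤ)) (r r' : ℤ) (hr : r ≠ 0) (hr' : r' ≠ 0)
    (hM : IsOutletData d M) (hM' : IsOutletData d M')
    (hred : ReducedData M) (hred' : ReducedData M') (hrr : r = r')
    (h : ∀ l u : ℤ → ℤ, IsAxle d l u →
      (Enforced d l u M 1 ↔ Enforced d l u M' 1)) :
    ∀ e, e ∈ M ↔ e ∈ M' := by
  have hd0 : (0 : ℤ) < d := by omega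
  -- canonical axle of M enforces M, hence M'
  have henf1 : Enforced d (canL M) (canU M) M' 1 :=
    (h (canL M) (canU M) (canAxle hd0 hM hred.1)).mp (canEnforced hd0 hred.1)
  have henf2 : Enforced d (canL M') (canU M') M 1 :=
    (h (canL M') (canU M') (canAxle hd0 hM' hred'.1)).mpr (canEnforced hd0 hred'.1)
  have key1 := canKey hd0 hM' hred' henf1
  have key2 := canKey hd0 hM hred henf2
  have main : ∀ (A B : List (ℤ × ℤ × ℤ)),
      (A.map Prod.fst).Pairwise (· ≠ ·) →
      (∀ e' ∈ B, ∃ e ∈ A, e.1 = e'.1 ∧ e'.2.1 ≤ e.2.1 ∧ e.2.2 ≤ e'.2.2) →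
      (∀ e ∈ A, ∃ e' ∈ B, e'.1 = e.1 ∧ e.2.1 ≤ e'.2.1 ∧ e'.2.2 ≤ e.2.2) →
      ∀ e ∈ A, e ∈ B := by
    intro A B hpA kAB kBA e he
    obtain ⟨e', he', h1, h2, h3⟩ := kBA e he
    obtain ⟨e'', he'', h4, h5, h6⟩ := kAB e' he'
    have : e'' = e := mem_uniq hpA he'' he (h4.trans h1)
    rw [this] at h5 h6
    have hl : e.2.1 = e'.2.1 := le_antisymm h2 h5
    have hu : e.2.2 = e'.2.2 := le_antisymm h6 h3
    have : e = e' := by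
      obtain ⟨p, l, u⟩ := e
      obtain ⟨p', l', u'⟩ := e'
      simp_all
    rw [this]; exact he'
  intro e
  constructor
  · intro he
    exact main M M' hred.1 key1 key2 e he
  · intro he
    refine main M' M hred'.1 key2 ?_ e he
    intro e0 he0
    obtain ⟨e1, he1, a, b, c⟩ := key1 e0 he0
    exact ⟨e1, he1, a, b, c⟩
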